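/- For the β(a,1)-coalescent with a > 0, a ≠ 2, the total rate g_n = a·∑_{k=1}^{n-1} k·B(a,k) equals (a/(a-2))·(1 - Γ(a)Γ(n+1)/Γ(a+n-1)) for all n ≥ 2; for a = 2, g_n = 2(h_n - 1) where h_n = ∑_{i=1}^n 1/i. -/

import Mathlib

open Real

/-- The Beta function `B(a,b) = Γ(a)Γ(b)/Γ(a+b)`. -/
noncomputable def betaFun (a b : ℝ) : ℝ := Real.Gamma a * Real.Gamma b / Real.Gamma (a + b)

lemma key1 (a : ℝ) (ha : 0 < a) (ha2 : a ≠ 2) :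
    ∀ m : ℕ, 1 ≤ m →
      ∑ k ∈ Finset.Icc 1 m, (k : ℝ) * betaFun a k
        = (1 - Real.Gamma a * Real.Gamma (m + 2) / Real.Gamma (a + m)) / (a - 2) := by
  intro m hm
  induction m, hm using Nat.le_induction with
  | base =>
    have hga : Real.Gamma a ≠ 0 := (Real.Gamma_pos_of_pos ha).ne'
    have ha0 : a ≠ 0 := ha.ne'
    have h1 : Real.Gamma (a + 1) = a * Real.Gamma a := Real.Gamma_add_one ha0
    have h3 : Real.Gamma ((1:ℝ) + 2) = 2 := by
      rw [show (1:ℝ) + 2 = 2 + 1 by norm_num, Real.Gamma_add_one two_ne_zero,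
        Real.Gamma_two]
      norm_num
    simp only [Finset.Icc_self, Finset.sum_singleton, Nat.cast_one, betaFun, Real.Gamma_one,
      h1, h3]
    have ha2' : a - 2 ≠ 0 := sub_ne_zero.mpr ha2
    field_simp
  | succ m hm ih =>
    rw [Finset.sum_Icc_succ_top (by omega), ih]
    have hga : Real.Gamma a ≠ 0 := (Real.Gamma_pos_of_pos ha).ne'
    have ha0 : a ≠ 0 := ha.ne'
    have ham : (0:ℝ) < a + m := by positivity
    have hgam : Real.Gamma (a + m) ≠ 0 := (Real.Gamma_pos_of_pos ham).ne'
    have hgm1 : Real.Gamma ((m:ℝ) + 1) ≠ 0 :=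
      (Real.Gamma_pos_of_pos (by positivity)).ne'
    have e1 : Real.Gamma (a + (m + 1 : ℕ)) = (a + m) * Real.Gamma (a + m) := by
      push_cast
      rw [show a + ((m:ℝ) + 1) = (a + m) + 1 by ring, Real.Gamma_add_one ham.ne']
    have e2 : Real.Gamma (((m:ℕ) + 1 : ℕ) + 2) = ((m:ℝ) + 2) * (((m:ℝ) + 1) * Real.Gamma ((m:ℝ) + 1)) := by
      push_cast
      rw [show (m:ℝ) + 1 + 2 = ((m:ℝ) + 2) + 1 by ring, Real.Gamma_add_one (by positivity),
        show (m:ℝ) + 2 = ((m:ℝ) + 1) + 1 by ring, Real.Gamma_add_one (by positivity)]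
    have e3 : Real.Gamma ((m:ℝ) + 2) = ((m:ℝ) + 1) * Real.Gamma ((m:ℝ) + 1) := by
      rw [show (m:ℝ) + 2 = ((m:ℝ) + 1) + 1 by ring, Real.Gamma_add_one (by positivity)]
    have ha2' : a - 2 ≠ 0 := sub_ne_zero.mpr ha2
    rw [betaFun, e1, e2]
    push_cast
    rw [e3]
    field_simp
    ring

lemma key2 : ∀ m : ℕ,
    ∑ k ∈ Finset.Icc 1 m, (k : ℝ) * betaFun 2 k
      = (∑ i ∈ Finset.Icc 1 (m + 1), 1 / (i : ℝ)) - 1 := by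
  intro m
  induction m with
  | zero => simp
  | succ m ih =>
    rw [Finset.sum_Icc_succ_top (by omega), ih,
      Finset.sum_Icc_succ_top (show 1 ≤ m + 1 + 1 by omega)]
    have hgm1 : Real.Gamma ((m:ℝ) + 1) ≠ 0 :=
      (Real.Gamma_pos_of_pos (by positivity)).ne'
    have e2 : Real.Gamma ((2:ℝ) + ((m:ℕ)+1:ℕ)) = ((m:ℝ) + 2) * (((m:ℝ) + 1) * Real.Gamma ((m:ℝ) + 1)) := by
      push_cast
      rw [show (2:ℝ) + ((m:ℝ) + 1) = ((m:ℝ) + 2) + 1 by ring, Real.Gamma_add_one (by positivity),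
        show (m:ℝ) + 2 = ((m:ℝ) + 1) + 1 by ring, Real.Gamma_add_one (by positivity)]
    rw [betaFun, e2, Real.Gamma_two]
    push_cast
    have hgm : Real.Gamma ((m:ℝ) + 1) = Real.Gamma ((m:ℝ) + 1) := rfl
    field_simp
    ring

theorem beta_coalescent_total_rates (a : ℝ) (ha : 0 < a) (n : ℕ) (hn : 2 ≤ n) :
    (a ≠ 2 →
      a * ∑ k ∈ Finset.Icc 1 (n - 1), (k : ℝ) * betaFun a k
        = a / (a - 2) * (1 - Real.Gamma a * Real.Gamma (n + 1) / Real.Gamma (a + n - 1))) ∧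
    (a = 2 →
      a * ∑ k ∈ Finset.Icc 1 (n - 1), (k : ℝ) * betaFun a k
        = 2 * ((∑ i ∈ Finset.Icc 1 n, 1 / (i : ℝ)) - 1)) := by
  constructor
  · intro ha2
    rw [key1 a ha ha2 (n - 1) (by omega)]
    have h1 : ((n - 1 : ℕ) : ℝ) = (n : ℝ) - 1 := by
      push_cast [Nat.cast_sub (by omega : 1 ≤ n)]; ring
    rw [h1, show (n:ℝ) - 1 + 2 = (n:ℝ) + 1 by ring, show a + ((n:ℝ) - 1) = a + n - 1 by ring]
    field_simp
  · intro ha2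
    subst ha2
    rw [key2 (n - 1), show n - 1 + 1 = n by omega]
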